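/- The restriction of the generator to functionals linear in π determines the filter dynamics: for the second-order differential operator L on ℝ^d × ℝ^m given by Lφ = (bπ)ᵀ∇_x φ + (Λᵀπ)ᵀ∇_π φ + ½Δ_x φ + (σ(x,π)∇_x)ᵀ∇_π φ with σ(x,π) = (D(π) − ππᵀ)b(x)ᵀ, and for any φ of the form φ(x,π) = πᵀψ(x) with ψ : ℝ^d → ℝ^m twice continuously differentiable, one has L(πᵀψ)(x,π) = πᵀ[ Λ(x)ψ(x) + ½Δ_x ψ(x) + D(bᵀ(x)∇_x)ψ(x) ], where D(bᵀ∇_x)ψ denotes the vector with i-th component (b(x)1_i)ᵀ∇ψ_i(x). In particular L maps π-linear functionals to π-linear functionals. -/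

import Mathlib

open Matrix Finset

/-- The partial derivative `∂f/∂x_j` at `x`. -/
noncomputable def pd {d : ℕ} (f : (Fin d → ℝ) → ℝ) (x : Fin d → ℝ) (j : Fin d) : ℝ :=
  fderiv ℝ f x (Pi.single j 1)

lemma pd_sum_const_mul {m d : ℕ} (π : Fin m → ℝ) (ψ : (Fin d → ℝ) → Fin m → ℝ)
    (h : ∀ i, Differentiable ℝ (fun y => ψ y i)) (y : Fin d → ℝ) (j : Fin d) :
    pd (fun z => ∑ i, π i * ψ z i) y j = ∑ i, π i * pd (fun z => ψ z i) y j := by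
  unfold pd
  rw [fderiv_fun_sum (fun i _ => ((h i y).const_mul (π i)))]
  rw [ContinuousLinearMap.sum_apply]
  refine Finset.sum_congr rfl fun i _ => ?_
  rw [fderiv_const_mul (h i y)]
  simp

/-- The generator `L` of the pair `(X, π)` maps `π`-linear functionals to `π`-linear
functionals: for `φ(x,π) = πᵀψ(x)`,
`L(πᵀψ) = πᵀ[Λψ + ½Δ_x ψ + D(bᵀ∇_x)ψ]`, where `D(bᵀ∇_x)ψ` has `i`-th component
`(b 1_i)ᵀ ∇ψ_i` and `σ(x,π) = (D(π) − ππᵀ) bᵀ`. -/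
theorem generator_on_pi_linear (m d : ℕ) (x : Fin d → ℝ)
    (π : Fin m → ℝ) (hπ0 : ∀ i, 0 ≤ π i) (hπ1 : ∑ i, π i = 1)
    (B : Matrix (Fin d) (Fin m) ℝ) (L : Matrix (Fin m) (Fin m) ℝ)
    (hL : ∀ i, ∑ j, L i j = 0)
    (ψ : (Fin d → ℝ) → Fin m → ℝ) (hψ : ∀ i, ContDiff ℝ 2 (fun y => ψ y i)) :
    -- (bπ)ᵀ ∇_x φ
    (∑ j, B.mulVec π j * pd (fun y => ∑ i, π i * ψ y i) x j)
      -- (Λᵀπ)ᵀ ∇_π φ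
      + (∑ i, L.transpose.mulVec π i * ψ x i)
      -- ½ Δ_x φ
      + (1 / 2) * (∑ j, pd (fun y => pd (fun z => ∑ i, π i * ψ z i) y j) x j)
      -- (σ(x,π) ∇_x)ᵀ ∇_π φ
      + (∑ i, ∑ j,
          ((Matrix.diagonal π - Matrix.vecMulVec π π) * B.transpose) i j
            * pd (fun y => ψ y i) x j)
    = ∑ i, π i *
        (L.mulVec (ψ x) i
          + (1 / 2) * (∑ j, pd (fun y => pd (fun z => ψ z i) y j) x j)
          + ∑ j, B j i * pd (fun y => ψ y i) x j) := by
  have hdiff : ∀ i, Differentiable ℝ (fun y => ψ y i) :=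
    fun i => (hψ i).differentiable two_ne_zero
  have hpd : ∀ i j, Differentiable ℝ (fun y => pd (fun z => ψ z i) y j) := by
    intro i j
    have h1 : ContDiff ℝ 1 (fderiv ℝ (fun y => ψ y i)) :=
      (hψ i).fderiv_right (by norm_num)
    have h2 : ContDiff ℝ 1 (fun y => fderiv ℝ (fun z => ψ z i) y (Pi.single j 1)) := by
      exact (ContinuousLinearMap.apply ℝ ℝ ((Pi.single j 1 : Fin d → ℝ))).contDiff.comp h1
    exact h2.differentiable one_ne_zero
  have key1 : ∀ y j, pd (fun z => ∑ i, π i * ψ z i) y j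
      = ∑ i, π i * pd (fun z => ψ z i) y j :=
    fun y j => pd_sum_const_mul π ψ hdiff y j
  have key2 : ∀ j, pd (fun y => pd (fun z => ∑ i, π i * ψ z i) y j) x j
      = ∑ i, π i * pd (fun y => pd (fun z => ψ z i) y j) x j := by
    intro j
    have : (fun y => pd (fun z => ∑ i, π i * ψ z i) y j)
        = fun y => ∑ i, π i * pd (fun z => ψ z i) y j := funext fun y => key1 y j
    rw [this]
    exact pd_sum_const_mul π (fun y i => pd (fun z => ψ z i) y j)
      (fun i => hpd i j) x j
  simp only [key1, key2]
  simp only [Matrix.mulVec, dotProduct, Matrix.transpose_apply, Matrix.mul_apply,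
    Matrix.sub_apply, Matrix.diagonal_apply, Matrix.vecMulVec_apply]
  simp only [Finset.sum_mul, Finset.mul_sum, sub_mul, Finset.sum_sub_distrib, mul_add,
    Finset.sum_add_distrib, Finset.sum_ite_eq, Finset.mem_univ, if_true]
  have key3 : ∀ j : Fin d, pd (fun y => ∑ i, π i * pd (fun z => ψ z i) y j) x j
      = ∑ i, π i * pd (fun y => pd (fun z => ψ z i) y j) x j :=
    fun j => pd_sum_const_mul π (fun y i => pd (fun z => ψ z i) y j) (fun i => hpd i j) x j
  simp only [key3, ite_mul, zero_mul, Finset.sum_ite_eq, Finset.mem_univ, if_true]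
  have hcancel : ∑ j : Fin d, ∑ k : Fin m, ∑ i : Fin m,
        B j i * π i * (π k * pd (fun z => ψ z k) x j)
      = ∑ k : Fin m, ∑ j : Fin d, ∑ i : Fin m,
        π k * π i * B j i * pd (fun y => ψ y k) x j := by
    rw [Finset.sum_comm]
    exact Finset.sum_congr rfl fun _ _ => Finset.sum_congr rfl fun _ _ =>
      Finset.sum_congr rfl fun _ _ => by ring
  have h2 : ∑ k : Fin m, ∑ i : Fin m, L i k * π i * ψ x k
      = ∑ k : Fin m, ∑ i : Fin m, π k * (L k i * ψ x i) := by
    rw [Finset.sum_comm]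
    exact Finset.sum_congr rfl fun _ _ => Finset.sum_congr rfl fun _ _ => by ring
  have h3 : ∑ j : Fin d, ∑ i : Fin m,
        (1 / 2 : ℝ) * (π i * pd (fun y => pd (fun z => ψ z i) y j) x j)
      = ∑ i : Fin m, ∑ j : Fin d,
        π i * (1 / 2 * pd (fun y => pd (fun z => ψ z i) y j) x j) := by
    rw [Finset.sum_comm]
    exact Finset.sum_congr rfl fun _ _ => Finset.sum_congr rfl fun _ _ => by ring
  have h4 : ∑ i : Fin m, ∑ j : Fin d, π i * B j i * pd (fun y => ψ y i) x j
      = ∑ i : Fin m, ∑ j : Fin d, π i * (B j i * pd (fun z => ψ z i) x j) := by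
    exact Finset.sum_congr rfl fun _ _ => Finset.sum_congr rfl fun _ _ => by ring
  simp only [Finset.mul_sum] at *
  linear_combination hcancel + h2 + h3 + h4
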